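/- arXiv:2004.01522 — 2 statements merged into one kernel-verified Lean document; each statement's English description precedes it below -/
import Mathlib

section
/- The dual scaling matrix with H_i = Q_i is a scalar multiple of the identity: (N·I²/(2σ_0))·I_N + Σ_{i=1}^{I} A_i Q_i⁻¹ A_iᵀ = ( N·I²/(2σ_0) + Σ_{i=1}^{I} (1 + γ_i²)/(σ_i·(2 + γ_i²)) )·I_N; in particular this matrix is positive definite and invertible. -/
open Matrix BigOperators Finset

noncomputable section

/-- The 2×2 block `M_i` with rows `(1, γ)` and `(γ, γ²)`. -/
def Mblk (γ : ℝ) : Matrix (Fin 2) (Fin 2) ℝ := !![1, γ; γ, γ ^ 2]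

/-- `Amat N γ` is the Kronecker product `I_N ⊗ (1 γ)` of the `N × N` identity with the
row vector `(1, γ)`, an `N × 2N` matrix (columns indexed by `Fin N × Fin 2`). -/
def Amat (N : ℕ) (γ : ℝ) : Matrix (Fin N) (Fin N × Fin 2) ℝ :=
  Matrix.of fun j p => (1 : Matrix (Fin N) (Fin N) ℝ) j p.1 * ![1, γ] p.2

/-- `Qmat N σ γ = σ (I_{2N} + I_N ⊗ M γ)`. -/
def Qmat (N : ℕ) (σ γ : ℝ) : Matrix (Fin N × Fin 2) (Fin N × Fin 2) ℝ :=
  σ • ((1 : Matrix (Fin N × Fin 2) (Fin N × Fin 2) ℝ) +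
    Matrix.kroneckerMap (· * ·) (1 : Matrix (Fin N) (Fin N) ℝ) (Mblk γ))


def Qinv (N : ℕ) (σ γ : ℝ) : Matrix (Fin N × Fin 2) (Fin N × Fin 2) ℝ :=
  (σ * (2 + γ ^ 2))⁻¹ •
    Matrix.kroneckerMap (· * ·) (1 : Matrix (Fin N) (Fin N) ℝ) !![1 + γ ^ 2, -γ; -γ, 2]

lemma Qmul (N : ℕ) (σ γ : ℝ) (hσ : 0 < σ) (hd : (0:ℝ) < 2 + γ ^ 2) :
    Qmat N σ γ * Qinv N σ γ = 1 := by
  have hne : σ * (2 + γ ^ 2) ≠ 0 := by positivity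
  ext ⟨j, a⟩ ⟨k, b⟩
  simp only [Qmat, Qinv, Matrix.mul_apply, Matrix.smul_apply, Matrix.add_apply,
    Matrix.kroneckerMap_apply, Fintype.sum_prod_type, Matrix.one_apply, Mblk,
    smul_eq_mul, Prod.mk.injEq]
  rcases eq_or_ne j k with rfl | hjk
  · simp [Finset.mul_sum, Finset.sum_mul, Finset.sum_ite_eq, Finset.sum_ite_eq']
    fin_cases a <;> fin_cases b <;> simp <;> field_simp <;> ring
  · simp [hjk, Finset.mul_sum, Finset.sum_mul, Finset.sum_ite_eq, Finset.sum_ite_eq', Ne.symm hjk]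

lemma Qinv_eq (N : ℕ) (σ γ : ℝ) (hσ : 0 < σ) (hd : (0:ℝ) < 2 + γ ^ 2) :
    (Qmat N σ γ)⁻¹ = Qinv N σ γ :=
  Matrix.inv_eq_right_inv (Qmul N σ γ hσ hd)

lemma key (N : ℕ) (σ γ : ℝ) (hσ : 0 < σ) (hd : (0:ℝ) < 2 + γ ^ 2) :
    Amat N γ * (Qmat N σ γ)⁻¹ * (Amat N γ)ᵀ
      = ((1 + γ ^ 2) / (σ * (2 + γ ^ 2))) • (1 : Matrix (Fin N) (Fin N) ℝ) := by
  rw [Qinv_eq N σ γ hσ hd]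
  ext j k
  simp only [Matrix.mul_apply, Amat, Qinv, Matrix.smul_apply, Matrix.transpose_apply,
    Matrix.kroneckerMap_apply, Fintype.sum_prod_type, Matrix.one_apply, Matrix.of_apply,
    smul_eq_mul]
  rcases eq_or_ne j k with rfl | hjk
  · simp [Finset.mul_sum, Finset.sum_mul, Finset.sum_ite_eq, Finset.sum_ite_eq', Fin.sum_univ_two]
    field_simp
    ring
  · simp [hjk, Ne.symm hjk, Finset.mul_sum, Finset.sum_mul, Finset.sum_ite_eq, Finset.sum_ite_eq']

/-- The dual scaling matrix with `H_i = Q_i` is a scalar multiple of the identity,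
positive definite, and invertible. -/
theorem stmt8
    (N I : ℕ) (hN : 2 ≤ N) (hI : 1 ≤ I) (σ0 : ℝ) (hσ0 : 0 < σ0)
    (γ σ : Fin I → ℝ) (hγ : ∀ i, 0 < γ i ∧ γ i ≤ 1) (hσ : ∀ i, 0 < σ i) :
    let Λ0 : Matrix (Fin N) (Fin N) ℝ :=
      (((N : ℝ) * (I : ℝ) ^ 2) / (2 * σ0)) • (1 : Matrix (Fin N) (Fin N) ℝ) +
        ∑ i, Amat N (γ i) * (Qmat N (σ i) (γ i))⁻¹ * (Amat N (γ i))ᵀ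
    Λ0 = (((N : ℝ) * (I : ℝ) ^ 2) / (2 * σ0)
            + ∑ i, (1 + γ i ^ 2) / (σ i * (2 + γ i ^ 2))) • (1 : Matrix (Fin N) (Fin N) ℝ) ∧
      Λ0.PosDef ∧ IsUnit Λ0 := by
  intro Λ0
  have heq : Λ0 = (((N : ℝ) * (I : ℝ) ^ 2) / (2 * σ0)
      + ∑ i, (1 + γ i ^ 2) / (σ i * (2 + γ i ^ 2))) • (1 : Matrix (Fin N) (Fin N) ℝ) := by
    show _ + _ = _
    rw [add_smul, Finset.sum_smul]
    congr 1
    refine Finset.sum_congr rfl fun i _ => ?_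
    exact key N (σ i) (γ i) (hσ i) (by positivity)
  have hc : 0 < ((N : ℝ) * (I : ℝ) ^ 2) / (2 * σ0)
      + ∑ i, (1 + γ i ^ 2) / (σ i * (2 + γ i ^ 2)) := by
    have h1 : 0 < ((N : ℝ) * (I : ℝ) ^ 2) / (2 * σ0) := by
      have : (0:ℝ) < N := by exact_mod_cast lt_of_lt_of_le (by norm_num) hN
      have : (0:ℝ) < I := by exact_mod_cast hI
      positivity
    have h2 : 0 ≤ ∑ i, (1 + γ i ^ 2) / (σ i * (2 + γ i ^ 2)) := by
      refine Finset.sum_nonneg fun i _ => ?_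
      have := hσ i
      positivity
    linarith
  refine ⟨heq, ?_⟩
  have hpd : ((((N : ℝ) * (I : ℝ) ^ 2) / (2 * σ0)
      + ∑ i, (1 + γ i ^ 2) / (σ i * (2 + γ i ^ 2))) •
      (1 : Matrix (Fin N) (Fin N) ℝ)).PosDef := by
    refine Matrix.PosDef.of_dotProduct_mulVec_pos ?_ ?_
    · unfold Matrix.IsHermitian
      simp [Matrix.conjTranspose_smul]
    · intro x hx
      simp only [Matrix.smul_mulVec, Matrix.one_mulVec, dotProduct_smul,
        smul_eq_mul, RCLike.star_def]
      exact mul_pos hc (dotProduct_star_self_pos_iff.2 hx)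
  refine ⟨heq ▸ hpd, ?_⟩
  · rw [heq]
    have h : ((((N : ℝ) * (I : ℝ) ^ 2) / (2 * σ0)
        + ∑ i, (1 + γ i ^ 2) / (σ i * (2 + γ i ^ 2))) • (1 : Matrix (Fin N) (Fin N) ℝ)) *
        ((((N : ℝ) * (I : ℝ) ^ 2) / (2 * σ0)
        + ∑ i, (1 + γ i ^ 2) / (σ i * (2 + γ i ^ 2)))⁻¹ • (1 : Matrix (Fin N) (Fin N) ℝ)) = 1 := by
      rw [Matrix.smul_mul, Matrix.mul_smul, smul_smul, mul_one, mul_inv_cancel₀ hc.ne', one_smul]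
    exact (Matrix.isUnit_iff_isUnit_det _).2 (IsUnit.of_mul_eq_one _ (by rw [← Matrix.det_mul, h, Matrix.det_one]))
end
end

section
/- Fix i ∈ {1,…,I}, let D ∈ ℝ^{m×2N} be any matrix (the active constraint Jacobian), let μ ≥ 0, and set H = Q_i + μ·Dᵀ D. Then H is symmetric positive definite (hence invertible), I_m + μ·D Q_i⁻¹ Dᵀ is invertible, and A_i H⁻¹ A_iᵀ = ((1 + γ_i²)/(σ_i·(2 + γ_i²)))·I_N − (μ/(σ_i²·(2 + γ_i²)²))·A_i Dᵀ (I_m + μ·D Q_i⁻¹ Dᵀ)⁻¹ D A_iᵀ. -/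
open Matrix BigOperators Finset

noncomputable section

lemma AAT (N : ℕ) (γ : ℝ) : Amat N γ * (Amat N γ)ᵀ = (1 + γ ^ 2) • 1 := by
  ext j k
  simp [Amat, Matrix.mul_apply, Fintype.sum_prod_type, Fin.sum_univ_two, Matrix.one_apply]
  by_cases h : j = k <;> simp [h] <;> ring

lemma ATA (N : ℕ) (γ : ℝ) :
    (Amat N γ)ᵀ * Amat N γ
      = Matrix.kroneckerMap (· * ·) (1 : Matrix (Fin N) (Fin N) ℝ) (Mblk γ) := by
  ext ⟨j, a⟩ ⟨k, b⟩
  simp [Amat, Mblk, Matrix.mul_apply, Matrix.one_apply, kroneckerMap_apply]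
  by_cases h : j = k <;> fin_cases a <;> fin_cases b <;>
    simp [h, eq_comm (a := k) (b := j)] <;> ring

lemma Q_eq (N : ℕ) (σ γ : ℝ) :
    Qmat N σ γ = σ • (1 + (Amat N γ)ᵀ * Amat N γ) := by rw [Qmat, ATA]

/-- Woodbury-type formula for `A_i H⁻¹ A_iᵀ` with `H = Q_i + μ Dᵀ D`. -/
theorem stmt9
    (N I : ℕ) (hN : 2 ≤ N) (hI : 1 ≤ I)
    (γ σ : Fin I → ℝ) (hγ : ∀ i, 0 < γ i ∧ γ i ≤ 1) (hσ : ∀ i, 0 < σ i)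
    (i : Fin I) (m : ℕ) (D : Matrix (Fin m) (Fin N × Fin 2) ℝ) (μ : ℝ) (hμ : 0 ≤ μ) :
    let Q := Qmat N (σ i) (γ i)
    let A := Amat N (γ i)
    let H := Q + μ • (Dᵀ * D)
    Hᵀ = H ∧ H.PosDef ∧ IsUnit H ∧
      IsUnit ((1 : Matrix (Fin m) (Fin m) ℝ) + μ • (D * Q⁻¹ * Dᵀ)) ∧
      A * H⁻¹ * Aᵀ
        = ((1 + γ i ^ 2) / (σ i * (2 + γ i ^ 2))) • (1 : Matrix (Fin N) (Fin N) ℝ)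
          - (μ / (σ i ^ 2 * (2 + γ i ^ 2) ^ 2)) •
              (A * Dᵀ * ((1 : Matrix (Fin m) (Fin m) ℝ) + μ • (D * Q⁻¹ * Dᵀ))⁻¹ * (D * Aᵀ)) := by
  intro Q A H
  obtain ⟨hγ0, hγ1⟩ := hγ i
  have hσ0 := hσ i
  have hσne : σ i ≠ 0 := ne_of_gt hσ0
  have hd : (2 + γ i ^ 2) ≠ 0 := by positivity
  have hHdef : H = Q + μ • (Dᵀ * D) := rfl
  have hA : A * Aᵀ = (1 + γ i ^ 2) • 1 := AAT N (γ i)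
  have hQeq : Q = σ i • (1 + Aᵀ * A) := Q_eq N (σ i) (γ i)
  set K := Aᵀ * A with hKdef
  have hK2 : K * K = (1 + γ i ^ 2) • K := by
    calc K * K = Aᵀ * (A * Aᵀ) * A := by simp only [hKdef, Matrix.mul_assoc]
    _ = (1 + γ i ^ 2) • K := by
        rw [hA]; simp [Matrix.mul_smul, Matrix.smul_mul, Matrix.mul_assoc]; rfl
  have hKsymm : Kᵀ = K := by rw [hKdef, Matrix.transpose_mul, Matrix.transpose_transpose]
  have hQsymm : Qᵀ = Q := by
    rw [hQeq, Matrix.transpose_smul, Matrix.transpose_add, Matrix.transpose_one, hKsymm]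
  -- inverse of Q
  have hQZ : Q * ((σ i)⁻¹ • ((1 : Matrix (Fin N × Fin 2) (Fin N × Fin 2) ℝ)
      - (2 + γ i ^ 2)⁻¹ • K)) = 1 := by
    rw [hQeq, Matrix.smul_mul, Matrix.mul_smul, smul_smul, mul_inv_cancel₀ hσne, one_smul]
    have expand : (1 + K) * (1 - (2 + γ i ^ 2)⁻¹ • K)
        = 1 + K - (2 + γ i ^ 2)⁻¹ • K - (2 + γ i ^ 2)⁻¹ • (K * K) := by
      simp only [mul_sub, add_mul, one_mul, mul_one, Matrix.mul_smul, smul_add]; abel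
    rw [expand, hK2, smul_smul]
    match_scalars <;> field_simp <;> ring
  have hQinv : Q⁻¹ = (σ i)⁻¹ • ((1 : Matrix (Fin N × Fin 2) (Fin N × Fin 2) ℝ)
      - (2 + γ i ^ 2)⁻¹ • K) := inv_eq_right_inv hQZ
  -- positive definiteness
  have hK_psd : ∀ c : ℝ, 0 ≤ c → (c • K).PosSemidef := by
    intro c hc
    have h1 : c • K = (Real.sqrt c • A)ᵀ * (Real.sqrt c • A) := by
      rw [Matrix.transpose_smul, Matrix.smul_mul, Matrix.mul_smul, smul_smul,
        Real.mul_self_sqrt hc, hKdef]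
    rw [h1]
    exact Matrix.posSemidef_conjTranspose_mul_self _
  have hD_psd : (μ • (Dᵀ * D)).PosSemidef := by
    have h1 : μ • (Dᵀ * D) = (Real.sqrt μ • D)ᵀ * (Real.sqrt μ • D) := by
      rw [Matrix.transpose_smul, Matrix.smul_mul, Matrix.mul_smul, smul_smul,
        Real.mul_self_sqrt hμ]
    rw [h1]
    exact Matrix.posSemidef_conjTranspose_mul_self _
  have hσ1_pd : ((σ i) • (1 : Matrix (Fin N × Fin 2) (Fin N × Fin 2) ℝ)).PosDef := by
    rw [Matrix.smul_one_eq_diagonal]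
    exact Matrix.posDef_diagonal_iff.2 fun _ => hσ0
  have hQpd : Q.PosDef := by
    rw [hQeq, smul_add]
    exact hσ1_pd.add_posSemidef (hK_psd _ hσ0.le)
  have hHpd : H.PosDef := by
    rw [hHdef, hQeq, smul_add, add_assoc]
    exact hσ1_pd.add_posSemidef (((hK_psd _ hσ0.le)).add hD_psd)
  have hHsymm : Hᵀ = H := by
    rw [hHdef, Matrix.transpose_add, hQsymm, Matrix.transpose_smul, Matrix.transpose_mul,
      Matrix.transpose_transpose]
  have hHunit : IsUnit H := hHpd.isUnit
  -- the matrix S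
  set S := (1 : Matrix (Fin m) (Fin m) ℝ) + μ • (D * Q⁻¹ * Dᵀ) with hSdef
  have hQinv_pd : Q⁻¹.PosDef := hQpd.inv
  have hS_psd : (μ • (D * Q⁻¹ * Dᵀ)).PosSemidef := by
    have h1 : μ • (D * Q⁻¹ * Dᵀ) = (Real.sqrt μ • D) * Q⁻¹ * (Real.sqrt μ • D)ᵀ := by
      rw [Matrix.transpose_smul, Matrix.smul_mul, Matrix.smul_mul, Matrix.mul_smul, smul_smul,
        Real.mul_self_sqrt hμ]
    rw [h1]
    exact hQinv_pd.posSemidef.mul_mul_conjTranspose_same _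
  have hSpd : S.PosDef := Matrix.PosDef.one.add_posSemidef hS_psd
  have hSunit : IsUnit S := hSpd.isUnit
  refine ⟨hHsymm, hHpd, hHunit, hSunit, ?_⟩
  -- key computations with A and Q⁻¹
  have hAK : A * K = (1 + γ i ^ 2) • A := by
    rw [hKdef, ← Matrix.mul_assoc, hA, Matrix.smul_mul, Matrix.one_mul]
  have hAQi : A * Q⁻¹ = (σ i * (2 + γ i ^ 2))⁻¹ • A := by
    rw [hQinv, Matrix.mul_smul, Matrix.mul_sub, Matrix.mul_one, Matrix.mul_smul, hAK, smul_smul]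
    match_scalars
    field_simp
    ring
  have hQiAT : Q⁻¹ * Aᵀ = (σ i * (2 + γ i ^ 2))⁻¹ • Aᵀ := by
    have h := congrArg Matrix.transpose hAQi
    simp only [Matrix.transpose_mul, Matrix.transpose_smul, Matrix.transpose_nonsing_inv,
      hQsymm] at h
    exact h
  have hAQA : A * Q⁻¹ * Aᵀ = ((1 + γ i ^ 2) / (σ i * (2 + γ i ^ 2))) • 1 := by
    rw [hAQi, Matrix.smul_mul, hA, smul_smul]
    congr 1
    field_simp
  rcases eq_or_lt_of_le hμ with hμ0 | hμpos
  · -- case μ = 0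
    have hμz : μ = 0 := hμ0.symm
    subst hμz
    have hHQ : H = Q := by rw [hHdef]; simp
    rw [hHQ, hAQA]
    simp
  · -- case μ > 0
    have hμne : μ ≠ 0 := ne_of_gt hμpos
    haveI : Invertible μ := invertibleOfNonzero hμne
    haveI : Invertible μ⁻¹ := invertibleOfNonzero (inv_ne_zero hμne)
    have hQdetu : IsUnit Q.det := (Matrix.isUnit_iff_isUnit_det Q).1 hQpd.isUnit
    have hSdetu : IsUnit S.det := (Matrix.isUnit_iff_isUnit_det S).1 hSunit
    have hCu : IsUnit (μ • (1 : Matrix (Fin m) (Fin m) ℝ)) := by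
      rw [Matrix.isUnit_iff_isUnit_det, Matrix.det_smul, Matrix.det_one, mul_one]
      exact isUnit_iff_ne_zero.2 (pow_ne_zero _ hμne)
    have hCinv : (μ • (1 : Matrix (Fin m) (Fin m) ℝ))⁻¹ = μ⁻¹ • 1 := by
      rw [Matrix.inv_smul (A := 1) μ (by simp), inv_one, invOf_eq_inv]
    have hrel : μ⁻¹ • S = μ⁻¹ • (1 : Matrix (Fin m) (Fin m) ℝ) + D * Q⁻¹ * Dᵀ := by
      rw [hSdef, smul_add, smul_smul, inv_mul_cancel₀ hμne, one_smul]
    have hACu : IsUnit ((μ • (1 : Matrix (Fin m) (Fin m) ℝ))⁻¹ + D * Q⁻¹ * Dᵀ) := by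
      rw [hCinv, ← hrel, Matrix.isUnit_iff_isUnit_det, Matrix.det_smul]
      exact (isUnit_iff_ne_zero.2 (pow_ne_zero _ (inv_ne_zero hμne))).mul hSdetu
    have hSinv : ((μ • (1 : Matrix (Fin m) (Fin m) ℝ))⁻¹ + D * Q⁻¹ * Dᵀ)⁻¹ = μ • S⁻¹ := by
      rw [hCinv, ← hrel, Matrix.inv_smul (A := S) μ⁻¹ hSdetu, invOf_eq_inv, inv_inv]
    have hH2 : H = Q + Dᵀ * (μ • (1 : Matrix (Fin m) (Fin m) ℝ)) * D := by
      rw [hHdef]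
      congr 1
      simp [Matrix.mul_smul, Matrix.smul_mul]
    have hWood : H⁻¹ = Q⁻¹ - μ • (Q⁻¹ * Dᵀ * S⁻¹ * D * Q⁻¹) := by
      rw [hH2, Matrix.add_mul_mul_inv_eq_sub _ _ _ _ hQpd.isUnit hCu hACu, hSinv]
      congr 1
      rw [Matrix.mul_smul, Matrix.smul_mul, Matrix.smul_mul]
    have hmid : A * (Q⁻¹ * Dᵀ * S⁻¹ * D * Q⁻¹) * Aᵀ
        = ((σ i * (2 + γ i ^ 2))⁻¹ * (σ i * (2 + γ i ^ 2))⁻¹)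
            • (A * Dᵀ * S⁻¹ * (D * Aᵀ)) := by
      have e1 : A * (Q⁻¹ * Dᵀ * S⁻¹ * D * Q⁻¹) * Aᵀ
          = A * Q⁻¹ * Dᵀ * S⁻¹ * D * (Q⁻¹ * Aᵀ) := by
        simp only [Matrix.mul_assoc]
      rw [e1, hAQi, hQiAT]
      simp only [Matrix.smul_mul, Matrix.mul_smul, smul_smul, Matrix.mul_assoc]
    have hc : μ * ((σ i * (2 + γ i ^ 2))⁻¹ * (σ i * (2 + γ i ^ 2))⁻¹)
        = μ / (σ i ^ 2 * (2 + γ i ^ 2) ^ 2) := by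
      rw [div_eq_mul_inv, ← mul_inv]
      congr 2
      ring
    rw [hWood, Matrix.mul_sub, Matrix.sub_mul, Matrix.mul_smul, Matrix.smul_mul, hAQA, hmid,
      smul_smul, hc]
end
end
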